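/- Let n ≥ 2, d ≥ 2 and m = Nat.choose (n + d − 1) (d − 1). The subspace of EuclideanSpace ℂ (Fin n → Fin d) spanned by the generalized Dicke states D_n^{k} over all excitation vectors k : Fin d → ℕ with ∑ a, k a = n and k a < n for every a (equivalently, k is not of the form n·δ_a) has finrank m − d, and every nonzero vector in this span is genuinely multipartite entangled; i.e., this span is a GES of dimension m − d. -/

import Mathlib

/-- The unnormalized generalized Dicke state of `n` qudits with excitation vector
`k : Fin d → ℕ`: the uniform superposition of all basis vectors `|i₁⋯iₙ⟩` in which
the letter `a` occurs exactly `k a` times. -/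
noncomputable def genDicke (n d : ℕ) (k : Fin d → ℕ) :
    EuclideanSpace ℂ (Fin n → Fin d) :=
  WithLp.toLp 2 (fun i => if ∀ a : Fin d, (Finset.univ.filter fun j => i j = a).card = k a then 1 else 0)

/-- `ψ` is biseparable across the bipartition `(S, Sᶜ)` of the `n` qudits. -/
def Biseparable {n d : ℕ} (S : Set (Fin n))
    (ψ : EuclideanSpace ℂ (Fin n → Fin d)) : Prop :=
  ∃ (φ : ((j : S) → Fin d) → ℂ) (χ : ((j : ↥Sᶜ) → Fin d) → ℂ),
    ∀ i, ψ i = φ (fun j => i j.val) * χ (fun j => i j.val)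

/-- A nonzero vector is genuinely multipartite entangled if it is not biseparable
across any nontrivial bipartition. -/
def GME {n d : ℕ} (ψ : EuclideanSpace ℂ (Fin n → Fin d)) : Prop :=
  ψ ≠ 0 ∧ ∀ S : Set (Fin n), S ≠ ∅ → S ≠ Set.univ → ¬ Biseparable S ψ

namespace GenDickeProof

open Finset

variable {n d : ℕ}

def typeVec (i : Fin n → Fin d) : Fin d → ℕ :=
  fun a => (Finset.univ.filter fun j => i j = a).card

lemma typeVec_eq_sum (i : Fin n → Fin d) (a : Fin d) :
    typeVec i a = ∑ j, if i j = a then 1 else 0 := by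
  rw [show typeVec i a = (Finset.univ.filter fun j => i j = a).card from rfl,
    Finset.card_filter]

lemma sum_typeVec (i : Fin n → Fin d) : ∑ a, typeVec i a = n := by
  have h := Finset.card_eq_sum_card_fiberwise
    (s := (univ : Finset (Fin n))) (t := (univ : Finset (Fin d))) (f := i)
    (fun x _ => mem_univ (i x))
  simp only [Finset.card_univ, Fintype.card_fin] at h
  exact h.symm

lemma genDicke_apply (k : Fin d → ℕ) (i : Fin n → Fin d) :
    genDicke n d k i = if typeVec i = k then 1 else 0 := by
  have h0 : genDicke n d k i
      = if (∀ a : Fin d, (Finset.univ.filter fun j => i j = a).card = k a) then 1 else 0 := rfl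
  rw [h0]
  exact if_congr ⟨fun hall => funext hall, fun h a => congrFun h a⟩ rfl rfl

lemma typeVec_comp (i : Fin n → Fin d) (σ : Equiv.Perm (Fin n)) :
    typeVec (i ∘ σ) = typeVec i := by
  funext a
  exact Finset.card_equiv σ (by simp)

lemma exists_typeVec {n : ℕ} (k : Fin d → ℕ) (hk : (∑ a, k a) = n) :
    ∃ i : Fin n → Fin d, typeVec i = k := by
  induction n generalizing k with
  | zero =>
    have hk0 : ∀ a ∈ (univ : Finset (Fin d)), k a = 0 := Finset.sum_eq_zero_iff.mp hk
    exact ⟨Fin.elim0, funext fun a => by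
      simp [typeVec, hk0 a (mem_univ a)]⟩
  | succ n ih =>
    have hex : ∃ a ∈ (univ : Finset (Fin d)), k a ≠ 0 :=
      Finset.exists_ne_zero_of_sum_ne_zero (by omega)
    obtain ⟨a0, -, ha0⟩ := hex
    set k' := Function.update k a0 (k a0 - 1) with hk'def
    have hsplit : k a0 + ∑ c ∈ univ.erase a0, k c = n + 1 := by
      rw [Finset.add_sum_erase _ _ (mem_univ a0)]; exact hk
    have h2 : ∑ c ∈ univ.erase a0, k' c = ∑ c ∈ univ.erase a0, k c :=
      Finset.sum_congr rfl fun c hc =>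
        Function.update_of_ne (Finset.ne_of_mem_erase hc) _ _
    have hsum' : ∑ a, k' a = n := by
      rw [← Finset.add_sum_erase _ k' (mem_univ a0), h2, hk'def,
        Function.update_self]
      omega
    obtain ⟨i', hi'⟩ := ih k' hsum'
    refine ⟨Fin.cons a0 i', funext fun a => ?_⟩
    have hstep : typeVec (Fin.cons a0 i') a = (if a0 = a then 1 else 0) + typeVec i' a := by
      rw [typeVec_eq_sum, typeVec_eq_sum i' a, Fin.sum_univ_succ]
      simp
    have hia := congrFun hi' a
    by_cases h : a = a0
    · subst h
      rw [hstep, hia, hk'def, Function.update_self, if_pos rfl]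
      omega
    · rw [hstep, hia, hk'def, Function.update_of_ne h, if_neg (Ne.symm h), zero_add]

lemma typeVec_update_add (i : Fin n → Fin d) (t : Fin n) (a c : Fin d) :
    typeVec (Function.update i t a) c + (if i t = c then 1 else 0)
      = typeVec i c + (if a = c then 1 else 0) := by
  rw [typeVec_eq_sum, typeVec_eq_sum,
      ← Finset.add_sum_erase _ _ (mem_univ t), ← Finset.add_sum_erase _ (fun j => if i j = c then 1 else 0) (mem_univ t)]
  have h2 : ∀ x ∈ univ.erase t,
      (if Function.update i t a x = c then 1 else 0) = (if i x = c then (1:ℕ) else 0) :=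
    fun x hx => by rw [Function.update_of_ne (Finset.ne_of_mem_erase hx)]
  rw [Finset.sum_congr rfl h2, Function.update_self]
  ring

def weightF (n d : ℕ) (i : Fin n → Fin d) : ℕ :=
  ∑ c, typeVec i c * (n + 1) ^ (d - c.1)

lemma weight_eq (i : Fin n → Fin d) (t : Fin n) (a : Fin d) :
    weightF n d (Function.update i t a) + (n+1) ^ (d - (i t).1)
      = weightF n d i + (n+1) ^ (d - a.1) := by
  have key : ∀ c : Fin d,
      (typeVec (Function.update i t a) c + (if i t = c then 1 else 0)) * (n+1) ^ (d - c.1)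
        = (typeVec i c + (if a = c then 1 else 0)) * (n+1) ^ (d - c.1) :=
    fun c => by rw [typeVec_update_add]
  have hsum := Finset.sum_congr rfl (fun c (_ : c ∈ (univ : Finset (Fin d))) => key c)
  simp only [add_mul, ite_mul, one_mul, zero_mul, Finset.sum_add_distrib] at hsum
  rw [Finset.sum_ite_eq, Finset.sum_ite_eq] at hsum
  simpa [weightF] using hsum


lemma span_props {ψ : EuclideanSpace ℂ (Fin n → Fin d)}
    (hψ : ψ ∈ Submodule.span ℂ {ψ | ∃ k : Fin d → ℕ,
        (∑ a, k a) = n ∧ (∀ a, k a < n) ∧ ψ = genDicke n d k}) :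
    (∀ i i', typeVec i = typeVec i' → ψ i = ψ i') ∧
    (∀ i, (∃ a, typeVec i a = n) → ψ i = 0) := by
  induction hψ using Submodule.span_induction with
  | mem x hx =>
    obtain ⟨k, hsum, hlt, rfl⟩ := hx
    constructor
    · intro i i' h; rw [genDicke_apply, genDicke_apply, h]
    · rintro i ⟨a, ha⟩
      rw [genDicke_apply, if_neg]
      intro h
      rw [h] at ha
      exact absurd ha (Nat.ne_of_lt (hlt a))
  | zero => exact ⟨fun _ _ _ => rfl, fun _ _ => rfl⟩
  | add x y hx hy ihx ihy =>
    refine ⟨fun i i' h => ?_, fun i ha => ?_⟩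
    · show x i + y i = x i' + y i'
      rw [ihx.1 i i' h, ihy.1 i i' h]
    · show x i + y i = 0
      rw [ihx.2 i ha, ihy.2 i ha, add_zero]
  | smul r x hx ih =>
    refine ⟨fun i i' h => ?_, fun i ha => ?_⟩
    · show r * x i = r * x i'
      rw [ih.1 i i' h]
    · show r * x i = 0
      rw [ih.2 i ha, mul_zero]

def KF (n d : ℕ) : Finset (Fin d → ℕ) :=
  (Finset.Nat.antidiagonalTuple d n).filter fun k => ∀ a, k a < n

lemma mem_KF {k : Fin d → ℕ} : k ∈ KF n d ↔ (∑ a, k a) = n ∧ ∀ a, k a < n := by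
  rw [KF, mem_filter, Finset.Nat.mem_antidiagonalTuple]

lemma lin_indep :
    LinearIndependent ℂ (fun k : ↥(KF n d) => genDicke n d (k : Fin d → ℕ)) := by
  rw [Fintype.linearIndependent_iff]
  intro g hg k
  obtain ⟨i, hi⟩ := exists_typeVec (k : Fin d → ℕ) (mem_KF.mp k.2).1
  let ev : EuclideanSpace ℂ (Fin n → Fin d) →ₗ[ℂ] ℂ :=
    { toFun := fun ψ => ψ i, map_add' := fun _ _ => rfl, map_smul' := fun _ _ => rfl }
  have h1 := congrArg ev hg
  rw [map_sum, map_zero] at h1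
  have h2 : ∀ k' : ↥(KF n d), ev (g k' • genDicke n d (k' : Fin d → ℕ))
      = g k' * (if (k' : Fin d → ℕ) = k then 1 else 0) := by
    intro k'
    show g k' * genDicke n d (k' : Fin d → ℕ) i = _
    rw [genDicke_apply, hi]
    congr 1
    exact if_congr eq_comm rfl rfl
  rw [Finset.sum_congr rfl (fun k' _ => h2 k')] at h1
  have h3 : ∀ k' : ↥(KF n d), k' ∈ (univ : Finset _) → k' ≠ k →
      g k' * (if (k' : Fin d → ℕ) = k then 1 else 0) = 0 := by
    intro k' _ hne
    rw [if_neg (fun h => hne (Subtype.ext h)), mul_zero]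
  rw [Finset.sum_eq_single k h3 (fun h => absurd (mem_univ k) h)] at h1
  rw [if_pos rfl, mul_one] at h1
  exact h1


def cardHom : Multiset (Fin d) →+ ℕ :=
  { toFun := Multiset.card, map_zero' := rfl, map_add' := Multiset.card_add }

lemma card_antidiagonalTuple :
    (Finset.Nat.antidiagonalTuple d n).card = (d + n - 1).choose n := by
  classical
  have e : ↥(Finset.Nat.antidiagonalTuple d n) ≃ Sym (Fin d) n :=
    { toFun := fun k => ⟨∑ a, Multiset.replicate (k.1 a) a, by
        rw [show Multiset.card (∑ a, Multiset.replicate (k.1 a) a)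
            = ∑ a, Multiset.card (Multiset.replicate (k.1 a) a) from map_sum cardHom _ _]
        simp only [Multiset.card_replicate]
        exact Finset.Nat.mem_antidiagonalTuple.mp k.2⟩
      invFun := fun s => ⟨fun a => s.1.count a, by
        rw [Finset.Nat.mem_antidiagonalTuple]
        have h2 : ∑ a : Fin d, s.1.count a = ∑ a ∈ s.1.toFinset, s.1.count a :=
          (Finset.sum_subset (subset_univ _) (fun x _ hx =>
            Multiset.count_eq_zero_of_notMem
              (fun h => hx (Multiset.mem_toFinset.mpr h)))).symm
        rw [h2, Multiset.toFinset_sum_count_eq, s.2]⟩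
      left_inv := fun k => by
        apply Subtype.ext
        funext a
        show Multiset.count a (∑ b, Multiset.replicate (k.1 b) b) = k.1 a
        rw [Multiset.count_sum']
        simp [Multiset.count_replicate]
      right_inv := fun s => by
        apply Subtype.ext
        show (∑ a : Fin d, Multiset.replicate (Multiset.count a s.1) a) = s.1
        have h2 : ∑ a : Fin d, Multiset.replicate (s.1.count a) a
            = ∑ a ∈ s.1.toFinset, Multiset.replicate (s.1.count a) a :=
          (Finset.sum_subset (subset_univ _) (fun x _ hx => by
            rw [Multiset.count_eq_zero_of_notMem
              (fun h => hx (Multiset.mem_toFinset.mpr h)), Multiset.replicate_zero])).symm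
        rw [h2]
        simp only [← Multiset.nsmul_singleton]
        exact Multiset.toFinset_sum_count_nsmul_eq s.1 }
  have hc := Fintype.card_congr e
  rw [Fintype.card_coe, Sym.card_sym_eq_choose, Fintype.card_fin] at hc
  exact hc

lemma bad_filter_eq (hn : 2 ≤ n) : (Finset.Nat.antidiagonalTuple d n).filter (fun k => ¬ ∀ a, k a < n)
      = Finset.univ.image (fun a : Fin d => Pi.single a n) := by
    ext k
    rw [mem_filter, Finset.Nat.mem_antidiagonalTuple, Finset.mem_image]
    constructor
    · rintro ⟨hsum, hbad⟩
      push_neg at hbad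
      obtain ⟨a, ha⟩ := hbad
      have hle : k a ≤ n := hsum ▸ Finset.single_le_sum (fun _ _ => Nat.zero_le _) (mem_univ a)
      have hka : k a = n := le_antisymm hle ha
      refine ⟨a, mem_univ a, ?_⟩
      have hrest : ∑ c ∈ univ.erase a, k c = 0 := by
        have := Finset.add_sum_erase univ k (mem_univ a)
        omega
      show Pi.single a n = k
      funext b
      by_cases hb : b = a
      · rw [hb, Pi.single_eq_same]
        exact hka.symm
      · rw [Pi.single_eq_of_ne hb]
        exact (Finset.sum_eq_zero_iff.mp hrest b (Finset.mem_erase.mpr ⟨hb, mem_univ b⟩)).symm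
    · rintro ⟨a, -, rfl⟩
      constructor
      · rw [Finset.sum_pi_single']
        simp
      · push_neg
        exact ⟨a, by rw [Pi.single_eq_same]⟩

lemma single_inj (hn : 2 ≤ n) : Function.Injective (fun a : Fin d => Pi.single a n) := by
    intro a b hab
    dsimp only at hab
    by_contra hne
    have h := congrFun hab a
    rw [Pi.single_eq_same, Pi.single_eq_of_ne hne] at h
    omega

lemma card_KF (hn : 2 ≤ n) : (KF n d).card = (d + n - 1).choose n - d := by
  classical
  have hsplit := Finset.card_filter_add_card_filter_not
    (s := Finset.Nat.antidiagonalTuple d n) (p := fun k => ∀ a, k a < n)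
  have hcard_bad : ((Finset.Nat.antidiagonalTuple d n).filter
      (fun k => ¬ ∀ a, k a < n)).card = d := by
    rw [bad_filter_eq hn, Finset.card_image_of_injective _ (single_inj hn), Finset.card_univ,
      Fintype.card_fin]
  rw [hcard_bad, card_antidiagonalTuple] at hsplit
  exact Nat.eq_sub_of_add_eq hsplit

end GenDickeProof

/-- Lemma 2: the span of the GME generalized Dicke states (those whose excitation
vector has all components `< n`) is a GES of dimension `m − d`, where
`m = (n + d − 1).choose (d − 1)`. -/
theorem genDicke_span_GES (n d : ℕ) (hn : 2 ≤ n) (hd : 2 ≤ d)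
    (m : ℕ) (hm : m = Nat.choose (n + d - 1) (d - 1)) :
    Module.finrank ℂ
        ↥(Submodule.span ℂ {ψ | ∃ k : Fin d → ℕ,
            (∑ a, k a) = n ∧ (∀ a, k a < n) ∧ ψ = genDicke n d k}) = m - d ∧
    ∀ ψ ∈ Submodule.span ℂ {ψ | ∃ k : Fin d → ℕ,
            (∑ a, k a) = n ∧ (∀ a, k a < n) ∧ ψ = genDicke n d k},
      ψ ≠ 0 → GME ψ := by
  classical
  open GenDickeProof Finset in
  constructor
  · -- dimension computation
    have hset : {ψ | ∃ k : Fin d → ℕ,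
          (∑ a, k a) = n ∧ (∀ a, k a < n) ∧ ψ = genDicke n d k}
        = Set.range (fun k : ↥(KF n d) => genDicke n d (k : Fin d → ℕ)) := by
      ext ψ
      constructor
      · rintro ⟨k, h1, h2, rfl⟩
        exact ⟨⟨k, mem_KF.mpr ⟨h1, h2⟩⟩, rfl⟩
      · rintro ⟨⟨k, hk⟩, rfl⟩
        obtain ⟨h1, h2⟩ := mem_KF.mp hk
        exact ⟨k, h1, h2, rfl⟩
    rw [hset, finrank_span_eq_card lin_indep, Fintype.card_coe, card_KF hn]
    have h1 : m = (d + n - 1).choose n := by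
      have hle : n ≤ n + d - 1 := by omega
      have h2 := Nat.choose_symm hle
      have h3 : n + d - 1 - n = d - 1 := by omega
      have h4 : d + n - 1 = n + d - 1 := by omega
      rw [hm, h4, ← h3, h2]
    rw [h1]
  · -- GME
    intro ψ hψ hψ0
    obtain ⟨P1, P2⟩ := span_props hψ
    refine ⟨hψ0, fun S hS1 hS2 hbs => ?_⟩
    obtain ⟨φ, χ, hfac⟩ := hbs
    obtain ⟨s, hs⟩ := Set.nonempty_iff_ne_empty.mpr hS1
    obtain ⟨t, ht⟩ := Set.nonempty_compl.mpr hS2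
    have hst : s ≠ t := fun h => ht (h ▸ hs)
    obtain ⟨i0, hi0⟩ : ∃ i, ψ i ≠ 0 := by
      by_contra h
      push_neg at h
      exact hψ0 (WithLp.ofLp_injective 2 (funext h))
    obtain ⟨i1, hi1mem, hi1max⟩ := Finset.exists_max_image
      (univ.filter fun i : Fin n → Fin d => ψ i ≠ 0) (weightF n d)
      ⟨i0, by simp [hi0]⟩
    have hi1 : ψ i1 ≠ 0 := (mem_filter.mp hi1mem).2
    set k := typeVec i1 with hk
    have hk_lt : ∀ c, k c < n := by
      intro c
      have hle : k c ≤ n := by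
        rw [hk]
        have hs1 := sum_typeVec i1
        have := Finset.single_le_sum (f := typeVec i1) (fun _ _ => Nat.zero_le _) (mem_univ c)
        omega
      rcases lt_or_eq_of_le hle with h | h
      · exact h
      · exact absurd (P2 i1 ⟨c, h⟩) hi1
    have hsum1 : ∑ c, k c = n := sum_typeVec i1
    obtain ⟨a, b, hab, ha, hb⟩ : ∃ a b : Fin d, a < b ∧ 0 < k a ∧ 0 < k b := by
      obtain ⟨a, -, ha⟩ := Finset.exists_ne_zero_of_sum_ne_zero
        (f := k) (s := univ) (by omega)
      have h2 : ∑ c ∈ univ.erase a, k c ≠ 0 := by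
        have h3 := Finset.add_sum_erase univ k (mem_univ a)
        have := hk_lt a
        omega
      obtain ⟨b, hbmem, hb⟩ := Finset.exists_ne_zero_of_sum_ne_zero h2
      have hba : b ≠ a := Finset.ne_of_mem_erase hbmem
      rcases lt_or_gt_of_ne hba with h | h
      · exact ⟨b, a, h, Nat.pos_of_ne_zero hb, Nat.pos_of_ne_zero ha⟩
      · exact ⟨a, b, h, Nat.pos_of_ne_zero ha, Nat.pos_of_ne_zero hb⟩
    have hpos : ∀ (i : Fin n → Fin d) (c : Fin d), 0 < typeVec i c → ∃ j, i j = c := by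
      intro i c hc
      obtain ⟨j, hj⟩ := Finset.card_pos.mp hc
      exact ⟨j, (mem_filter.mp hj).2⟩
    obtain ⟨j1, hj1⟩ := hpos i1 a ha
    set i2 : Fin n → Fin d := i1 ∘ (Equiv.swap s j1) with hi2def
    have hty2 : typeVec i2 = k := typeVec_comp i1 _
    have hi2s : i2 s = a := by
      rw [hi2def]
      show i1 (Equiv.swap s j1 s) = a
      rw [Equiv.swap_apply_left, hj1]
    obtain ⟨j2, hj2⟩ := hpos i2 b (by rw [hty2]; exact hb)
    have hj2s : j2 ≠ s := by
      intro h
      rw [h, hi2s] at hj2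
      exact (ne_of_lt hab) hj2
    set i : Fin n → Fin d := i2 ∘ (Equiv.swap t j2) with hidef
    have hty : typeVec i = k := by rw [hidef, typeVec_comp, hty2]
    have hit : i t = b := by
      rw [hidef]
      show i2 (Equiv.swap t j2 t) = b
      rw [Equiv.swap_apply_left, hj2]
    have his : i s = a := by
      rw [hidef]
      show i2 (Equiv.swap t j2 s) = a
      rw [Equiv.swap_apply_of_ne_of_ne hst (fun h => hj2s h.symm), hi2s]
    have hci : ψ i = ψ i1 := P1 _ _ (by rw [hty])
    set iba : Fin n → Fin d := i ∘ (Equiv.swap s t) with hbadef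
    have hcba : ψ iba = ψ i1 := P1 _ _ (by rw [hbadef, typeVec_comp, hty])
    set iaa : Fin n → Fin d := Function.update i t a with haadef
    set ibb : Fin n → Fin d := Function.update i s b with hbbdef
    have haa0 : ψ iaa = 0 := by
      by_contra h
      have hle : weightF n d iaa ≤ weightF n d i1 := hi1max _ (by simp [h])
      have hw := weight_eq i t a
      rw [hit] at hw
      have hFi : weightF n d i = weightF n d i1 := by
        rw [weightF, weightF, hty, hk]
      have hlt : (n+1) ^ (d - b.1) < (n+1) ^ (d - a.1) := by
        apply Nat.pow_lt_pow_right (by omega)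
        have hbd := b.isLt
        have := hab
        omega
      rw [haadef] at hle
      omega
    -- factorization identity
    have rS_aa : (fun j : ↥S => iaa j.1) = (fun j : ↥S => i j.1) :=
      funext fun j => Function.update_of_ne (fun h => ht (by rw [← h]; exact j.2)) _ _
    have rC_aa : (fun j : ↥Sᶜ => iaa j.1) = (fun j : ↥Sᶜ => iba j.1) := by
      funext j
      by_cases hjt : j.1 = t
      · show Function.update i t a j.1 = i (Equiv.swap s t j.1)
        rw [hjt, Function.update_self, Equiv.swap_apply_right, his]
      · have hjs : j.1 ≠ s := fun h => j.2 (by rw [h]; exact hs)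
        show Function.update i t a j.1 = i (Equiv.swap s t j.1)
        rw [Function.update_of_ne hjt, Equiv.swap_apply_of_ne_of_ne hjs hjt]
    have rS_bb : (fun j : ↥S => ibb j.1) = (fun j : ↥S => iba j.1) := by
      funext j
      by_cases hjs : j.1 = s
      · show Function.update i s b j.1 = i (Equiv.swap s t j.1)
        rw [hjs, Function.update_self, Equiv.swap_apply_left, hit]
      · have hjt : j.1 ≠ t := fun h => ht (by rw [← h]; exact j.2)
        show Function.update i s b j.1 = i (Equiv.swap s t j.1)
        rw [Function.update_of_ne hjs, Equiv.swap_apply_of_ne_of_ne hjs hjt]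
    have rC_bb : (fun j : ↥Sᶜ => ibb j.1) = (fun j : ↥Sᶜ => i j.1) :=
      funext fun j => Function.update_of_ne
        (fun h => j.2 (by rw [h]; exact hs)) _ _
    have hkey : ψ i * ψ iba = ψ iaa * ψ ibb := by
      rw [hfac i, hfac iba, hfac iaa, hfac ibb, rS_aa, rC_aa, rS_bb, rC_bb]
      ring
    rw [haa0, zero_mul, hcba, hci] at hkey
    exact hi1 (mul_self_eq_zero.mp hkey)
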